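/- Let S be a positive face structure and a, b ∈ S_n. If γ(a) = γ(b) then either a = b or a and b are <⁺-comparable. If γ(a) <⁺ γ(b) then either a <⁺ b or a <⁻ b. If a <⁻ b then γ(a) <⁺ γ(b). -/

import Mathlib

/-- A pre-hypergraph: dimension-indexed finite sets of faces together with
codomain functions `gam k : S_{k+1} → S_k` and domain assignments
`del k : S_{k+1} → Finset S_k`. -/
structure PreHG where
  faces : ℕ → Finset ℕ
  gam : ℕ → ℕ → ℕ
  del : ℕ → ℕ → Finset ℕ

namespace PreHG

/-- δ extended to sets of faces. -/
def delS (S : PreHG) (k : ℕ) (A : Finset ℕ) : Finset ℕ := A.biUnion (S.del k)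

/-- γ extended to sets of faces. -/
def gamS (S : PreHG) (k : ℕ) (A : Finset ℕ) : Finset ℕ := A.image (S.gam k)

/-- The set `ι(a) = δδ(a) ∩ γδ(a)` of internal faces of a face `a` of dimension `k+2`
(the result lives in dimension `k`). -/
def iota (S : PreHG) (k : ℕ) (a : ℕ) : Finset ℕ :=
  S.delS k (S.del (k+1) a) ∩ S.gamS k (S.del (k+1) a)

/-- One step of the upper order: `a ⊲⁺ b` on faces of dimension `k`:
there is `α` of dimension `k+1` with `a ∈ δ(α)` and `γ(α) = b`. -/
def ltPlusOne (S : PreHG) (k : ℕ) (a b : ℕ) : Prop :=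
  ∃ α ∈ S.faces (k+1), a ∈ S.del k α ∧ S.gam k α = b

/-- The upper order `<⁺` on faces of dimension `k` (transitive closure of `⊲⁺`). -/
def ltPlus (S : PreHG) (k : ℕ) : ℕ → ℕ → Prop :=
  Relation.TransGen (S.ltPlusOne k)

/-- One step of the lower order: `a ⊲⁻ b` iff `γ(a) ∈ δ(b)`, on faces of dimension `k`
(the empty relation in dimension 0). -/
def ltMinusOne (S : PreHG) : ℕ → ℕ → ℕ → Prop
  | 0, _, _ => False
  | (k+1), a, b => a ∈ S.faces (k+1) ∧ b ∈ S.faces (k+1) ∧ S.gam k a ∈ S.del k b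

/-- The lower order `<⁻` on faces of dimension `k` (transitive closure of `⊲⁻`). -/
def ltMinus (S : PreHG) (k : ℕ) : ℕ → ℕ → Prop :=
  Relation.TransGen (S.ltMinusOne k)

/-- Comparability in the upper order. -/
def perpPlus (S : PreHG) (k : ℕ) (a b : ℕ) : Prop := S.ltPlus k a b ∨ S.ltPlus k b a

/-- Comparability in the lower order. -/
def perpMinus (S : PreHG) (k : ℕ) (a b : ℕ) : Prop := S.ltMinus k a b ∨ S.ltMinus k b a

/-- Iterated codomain `γ^{(l)}`: maps a face of dimension `l+m` down to dimension `l`. -/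
def gDown (S : PreHG) (l : ℕ) : ℕ → ℕ → ℕ
  | 0, a => a
  | (m+1), a => gDown S l m (S.gam (l+m) a)

/-- The axioms of a positive hypergraph. -/
def IsHG (S : PreHG) : Prop :=
  (∀ k a, a ∈ S.faces (k+1) → S.gam k a ∈ S.faces k) ∧
  (∀ k a, a ∈ S.faces (k+1) → S.del k a ⊆ S.faces k) ∧
  (∀ k a, a ∈ S.faces (k+1) → (S.del k a).Nonempty) ∧
  (∀ a ∈ S.faces 1, (S.del 0 a).card = 1) ∧
  (∃ N, ∀ k, N ≤ k → S.faces k = ∅)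

/-- Globularity: for faces of dimension ≥ 2,
`{γγ(a)} = γδ(a) − δδ(a)` and `δγ(a) = δδ(a) − γδ(a)`. -/
def Globular (S : PreHG) : Prop :=
  ∀ k a, a ∈ S.faces (k+2) →
    ({S.gam k (S.gam (k+1) a)} : Finset ℕ)
        = S.gamS k (S.del (k+1) a) \ S.delS k (S.del (k+1) a) ∧
      S.del k (S.gam (k+1) a)
        = S.delS k (S.del (k+1) a) \ S.gamS k (S.del (k+1) a)

/-- Strictness: `<⁺` is irreflexive in every dimension. -/
def StrictPlus (S : PreHG) : Prop := ∀ k, ∀ a ∈ S.faces k, ¬ S.ltPlus k a a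

/-- `<⁺` is linear in dimension 0. -/
def LinearZero (S : PreHG) : Prop :=
  ∀ a ∈ S.faces 0, ∀ b ∈ S.faces 0, a = b ∨ S.ltPlus 0 a b ∨ S.ltPlus 0 b a

/-- Disjointness: no two faces of positive dimension are comparable in both orders. -/
def Disjointness (S : PreHG) : Prop :=
  ∀ k a b, a ∈ S.faces (k+1) → b ∈ S.faces (k+1) →
    ¬ (S.perpPlus (k+1) a b ∧ S.perpMinus (k+1) a b)

/-- Pencil linearity: γ-fibers and δ-fibers are linearly ordered by `<⁺`. -/
def Pencil (S : PreHG) : Prop :=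
  ∀ k x,
    (∀ a b, a ∈ S.faces (k+1) → b ∈ S.faces (k+1) →
      S.gam k a = x → S.gam k b = x → a = b ∨ S.perpPlus (k+1) a b) ∧
    (∀ a b, a ∈ S.faces (k+1) → b ∈ S.faces (k+1) →
      x ∈ S.del k a → x ∈ S.del k b → a = b ∨ S.perpPlus (k+1) a b)

/-- A positive face structure: a nonempty positive hypergraph satisfying
globularity, strictness, disjointness and pencil linearity. -/
def IsPFS (S : PreHG) : Prop :=
  S.IsHG ∧ (S.faces 0).Nonempty ∧ S.Globular ∧ S.StrictPlus ∧ S.LinearZero ∧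
    S.Disjointness ∧ S.Pencil

end PreHG

namespace PreHG

attribute [local instance] Classical.propDecidable

variable {S : PreHG}

theorem ltPlusOne_mem (hS : S.IsPFS) {k a b : ℕ} (h : S.ltPlusOne k a b) :
    a ∈ S.faces k ∧ b ∈ S.faces k := by
  obtain ⟨α, hα, h1, h2⟩ := h
  exact ⟨hS.1.2.1 k α hα h1, h2 ▸ hS.1.1 k α hα⟩

theorem ltPlus_mem (hS : S.IsPFS) {k a b : ℕ} (h : S.ltPlus k a b) :
    a ∈ S.faces k ∧ b ∈ S.faces k := by
  induction h with
  | single h => exact ltPlusOne_mem hS h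
  | tail _ h ih => exact ⟨ih.1, (ltPlusOne_mem hS h).2⟩

theorem ltPlus_asymm' (hS : S.IsPFS) {k a b : ℕ} (h1 : S.ltPlus k a b)
    (h2 : S.ltPlus k b a) : False :=
  hS.2.2.2.1 k a (ltPlus_mem hS h1).1 (h1.trans h2)

theorem ltPlus_irrefl' (hS : S.IsPFS) {k a : ℕ} (h : S.ltPlus k a a) : False :=
  hS.2.2.2.1 k a (ltPlus_mem hS h).1 h

theorem le_trans' (hS : S.IsPFS) {k a b c : ℕ} (h1 : a = b ∨ S.ltPlus k a b)
    (h2 : b = c ∨ S.ltPlus k b c) : a = c ∨ S.ltPlus k a c := by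
  rcases h1 with rfl | h1
  · exact h2
  · rcases h2 with rfl | h2
    · exact Or.inr h1
    · exact Or.inr (h1.trans h2)

theorem le_antisymm' (hS : S.IsPFS) {k a b : ℕ} (h1 : a = b ∨ S.ltPlus k a b)
    (h2 : b = a ∨ S.ltPlus k b a) : a = b := by
  rcases h1 with rfl | h1
  · rfl
  · rcases h2 with rfl | h2
    · rfl
    · exact (ltPlus_asymm' hS h1 h2).elim

/-- γ is weakly monotone on one ⊲⁺ step (via globularity), auxiliary form with a
cardinality fuel for the recursion inside `δ(A)`. -/
theorem gam_le_aux (hS : S.IsPFS) {m : ℕ} :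
    ∀ n : ℕ, ∀ A a : ℕ, A ∈ S.faces (m+2) → a ∈ S.del (m+1) A →
    ((S.del (m+1) A).filter (fun e => S.ltPlus m (S.gam m a) (S.gam m e))).card < n →
    S.gam m a = S.gam m (S.gam (m+1) A) ∨
      S.ltPlus m (S.gam m a) (S.gam m (S.gam (m+1) A)) := by
  intro n
  induction n with
  | zero => intro A a _ _ h; exact absurd h (Nat.not_lt_zero _)
  | succ n ih =>
    intro A a hA ha hcard
    by_cases hin : S.gam m a ∈ S.delS m (S.del (m+1) A)
    · obtain ⟨e, he, hge⟩ := Finset.mem_biUnion.mp hin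
      have heF : e ∈ S.faces (m+1) := hS.1.2.1 (m+1) A hA he
      have h1 : S.ltPlus m (S.gam m a) (S.gam m e) :=
        Relation.TransGen.single ⟨e, heF, hge, rfl⟩
      have hsub : (S.del (m+1) A).filter (fun x => S.ltPlus m (S.gam m e) (S.gam m x)) ⊆
          (S.del (m+1) A).filter (fun x => S.ltPlus m (S.gam m a) (S.gam m x)) := by
        intro x hx
        rw [Finset.mem_filter] at hx ⊢
        exact ⟨hx.1, h1.trans hx.2⟩
      have hss : (S.del (m+1) A).filter (fun x => S.ltPlus m (S.gam m e) (S.gam m x)) ⊂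
          (S.del (m+1) A).filter (fun x => S.ltPlus m (S.gam m a) (S.gam m x)) := by
        rw [Finset.ssubset_iff_of_subset hsub]
        refine ⟨e, Finset.mem_filter.mpr ⟨he, h1⟩, fun hmem => ?_⟩
        exact ltPlus_irrefl' hS (Finset.mem_filter.mp hmem).2
      have hlt : ((S.del (m+1) A).filter
          (fun x => S.ltPlus m (S.gam m e) (S.gam m x))).card < n :=
        lt_of_lt_of_le (Finset.card_lt_card hss) (Nat.lt_succ_iff.mp hcard)
      rcases ih A e hA he hlt with h | h
      · exact Or.inr (h ▸ h1)
      · exact Or.inr (h1.trans h)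
    · left
      have hm : S.gam m a ∈ S.gamS m (S.del (m+1) A) := Finset.mem_image.mpr ⟨a, ha, rfl⟩
      have hsing : S.gam m a ∈ ({S.gam m (S.gam (m+1) A)} : Finset ℕ) := by
        rw [(hS.2.2.1 m A hA).1]
        exact Finset.mem_sdiff.mpr ⟨hm, hin⟩
      exact Finset.mem_singleton.mp hsing

/-- γ is weakly monotone w.r.t. `<⁺`. -/
theorem gam_mono (hS : S.IsPFS) {m a b : ℕ} (h : S.ltPlus (m+1) a b) :
    S.gam m a = S.gam m b ∨ S.ltPlus m (S.gam m a) (S.gam m b) := by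
  induction h with
  | single h =>
    obtain ⟨A, hA, ha, rfl⟩ := h
    exact gam_le_aux hS _ A _ hA ha (Nat.lt_succ_self _)
  | tail _ h ih =>
    obtain ⟨A, hA, ha, rfl⟩ := h
    exact le_trans' hS ih (gam_le_aux hS _ A _ hA ha (Nat.lt_succ_self _))

/-- Part 3: `a <⁻ b` implies `γ(a) <⁺ γ(b)`. -/
theorem gam_ltPlus_of_ltMinus {m a b : ℕ} (h : S.ltMinus (m+1) a b) :
    S.ltPlus m (S.gam m a) (S.gam m b) := by
  induction h with
  | single h => exact Relation.TransGen.single ⟨_, h.2.1, h.2.2, rfl⟩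
  | tail _ h ih => exact ih.tail ⟨_, h.2.1, h.2.2, rfl⟩

/-- The key "merging" lemma: if `g` is below both `a` and `c₁` in `≤⁺`, with
`γ(g) = γ(a) ≠ γ(c₁)`, then `a <⁺ c₁`. -/
theorem lemW (hS : S.IsPFS) {k a c₁ : ℕ} (ha : a ∈ S.faces (k+1))
    (hne : S.gam k a ≠ S.gam k c₁) :
    ∀ n : ℕ, ∀ g : ℕ, g ∈ S.faces (k+1) → S.gam k g = S.gam k a →
      (g = a ∨ S.ltPlus (k+1) g a) → (g = c₁ ∨ S.ltPlus (k+1) g c₁) →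
      ((S.faces (k+1)).filter (fun z => S.ltPlus (k+1) g z)).card < n →
      S.ltPlus (k+1) a c₁ := by
  intro n
  induction n with
  | zero => intro g _ _ _ _ h; exact absurd h (Nat.not_lt_zero _)
  | succ n ih =>
    intro g hg hγg hga hgc hcard
    rcases hga with rfl | hga
    · rcases hgc with rfl | hgc
      · exact absurd rfl hne
      · exact hgc
    · rcases hgc with rfl | hgc
      · exact absurd hγg (Ne.symm hne)
      · obtain ⟨g', ⟨C, hC, hgC, rfl⟩, hg'a⟩ := Relation.TransGen.head'_iff.mp hga
        obtain ⟨g'', ⟨D, hD, hgD, rfl⟩, hg''c⟩ := Relation.TransGen.head'_iff.mp hgc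
        have hg'a' : S.gam (k+1) C = a ∨ S.ltPlus (k+1) (S.gam (k+1) C) a :=
          (Relation.reflTransGen_iff_eq_or_transGen.mp hg'a).imp Eq.symm id
        have hg''c' : S.gam (k+1) D = c₁ ∨ S.ltPlus (k+1) (S.gam (k+1) D) c₁ :=
          (Relation.reflTransGen_iff_eq_or_transGen.mp hg''c).imp Eq.symm id
        have hpen := (hS.2.2.2.2.2.2 (k+1) g).2 C D hC hD hgC hgD
        have hkey : ∃ e : ℕ, S.ltPlusOne (k+1) g e ∧
            (e = a ∨ S.ltPlus (k+1) e a) ∧ (e = c₁ ∨ S.ltPlus (k+1) e c₁) := by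
          rcases hpen with rfl | hp
          · exact ⟨S.gam (k+1) C, ⟨C, hC, hgC, rfl⟩, hg'a', hg''c'⟩
          · have hp' : S.ltPlus (k+2) C D ∨ S.ltPlus (k+2) D C := hp
            rcases hp' with hCD | hDC
            · exact ⟨S.gam (k+1) C, ⟨C, hC, hgC, rfl⟩, hg'a',
                le_trans' hS (gam_mono hS hCD) hg''c'⟩
            · exact ⟨S.gam (k+1) D, ⟨D, hD, hgD, rfl⟩,
                le_trans' hS (gam_mono hS hDC) hg'a', hg''c'⟩
        obtain ⟨e, hge, hea, hec⟩ := hkey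
        have heF : e ∈ S.faces (k+1) := (ltPlusOne_mem hS hge).2
        have hγe : S.gam k e = S.gam k a := by
          have h1 : S.gam k e = S.gam k a ∨ S.ltPlus k (S.gam k e) (S.gam k a) := by
            rcases hea with rfl | h
            · exact Or.inl rfl
            · exact gam_mono hS h
          have h2 : S.gam k a = S.gam k e ∨ S.ltPlus k (S.gam k a) (S.gam k e) := by
            have h3 := gam_mono hS (Relation.TransGen.single hge)
            rwa [hγg] at h3
          exact le_antisymm' hS h1 h2
        have hsub : (S.faces (k+1)).filter (fun z => S.ltPlus (k+1) e z) ⊆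
            (S.faces (k+1)).filter (fun z => S.ltPlus (k+1) g z) := by
          intro x hx
          rw [Finset.mem_filter] at hx ⊢
          exact ⟨hx.1, (Relation.TransGen.single hge).trans hx.2⟩
        have hss : (S.faces (k+1)).filter (fun z => S.ltPlus (k+1) e z) ⊂
            (S.faces (k+1)).filter (fun z => S.ltPlus (k+1) g z) := by
          rw [Finset.ssubset_iff_of_subset hsub]
          refine ⟨e, Finset.mem_filter.mpr ⟨heF, Relation.TransGen.single hge⟩,
            fun hmem => ?_⟩
          exact ltPlus_irrefl' hS (Finset.mem_filter.mp hmem).2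
        exact ih e heF hγe hea hec
          (lt_of_lt_of_le (Finset.card_lt_card hss) (Nat.lt_succ_iff.mp hcard))

/-- One-step exchange: if `a ⊲⁻ c` and `c ⊲⁺ γ(A)` (via `A`), then either
`a ⊲⁻ γ(A)` or `a <⁺ γ(A)`. -/
theorem lemXstep (hS : S.IsPFS) {k a c A : ℕ} (hA : A ∈ S.faces (k+2))
    (hc : c ∈ S.del (k+1) A) (ha : a ∈ S.faces (k+1)) (hγ : S.gam k a ∈ S.del k c) :
    S.gam k a ∈ S.del k (S.gam (k+1) A) ∨ S.ltPlus (k+1) a (S.gam (k+1) A) := by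
  have hcF : c ∈ S.faces (k+1) := hS.1.2.1 (k+1) A hA hc
  have hdel : S.gam k a ∈ S.delS k (S.del (k+1) A) := Finset.mem_biUnion.mpr ⟨c, hc, hγ⟩
  by_cases him : S.gam k a ∈ S.gamS k (S.del (k+1) A)
  · obtain ⟨f, hf, hγf⟩ := Finset.mem_image.mp him
    have hfF : f ∈ S.faces (k+1) := hS.1.2.1 (k+1) A hA hf
    have hfc₁ : S.ltPlusOne (k+1) f (S.gam (k+1) A) := ⟨A, hA, hf, rfl⟩
    have hcontra : (S.gam (k+1) A = a ∨ S.ltPlus (k+1) (S.gam (k+1) A) a) → False := by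
      intro hle
      have hca : S.ltPlus (k+1) c a := by
        rcases hle with h | h
        · exact Relation.TransGen.single (h ▸ (⟨A, hA, hc, rfl⟩ :
            S.ltPlusOne (k+1) c (S.gam (k+1) A)))
        · exact (Relation.TransGen.single (⟨A, hA, hc, rfl⟩ :
            S.ltPlusOne (k+1) c (S.gam (k+1) A))).trans h
      exact hS.2.2.2.2.2.1 k a c ha hcF
        ⟨Or.inr hca, Or.inl (Relation.TransGen.single ⟨ha, hcF, hγ⟩)⟩
    rcases (hS.2.2.2.2.2.2 k (S.gam k a)).1 a f ha hfF rfl hγf with rfl | hp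
    · exact Or.inr (Relation.TransGen.single ⟨A, hA, hf, rfl⟩)
    · have hp' : S.ltPlus (k+1) a f ∨ S.ltPlus (k+1) f a := hp
      rcases hp' with haf | hfa
      · exact Or.inr (haf.tail hfc₁)
      · obtain ⟨h₁, ⟨B, hB, hfB, rfl⟩, hh₁a⟩ := Relation.TransGen.head'_iff.mp hfa
        have hh₁a' : S.gam (k+1) B = a ∨ S.ltPlus (k+1) (S.gam (k+1) B) a :=
          (Relation.reflTransGen_iff_eq_or_transGen.mp hh₁a).imp Eq.symm id
        have hpen := (hS.2.2.2.2.2.2 (k+1) f).2 A B hA hB hf hfB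
        rcases hpen with rfl | hp2
        · exact (hcontra hh₁a').elim
        · have hp2' : S.ltPlus (k+2) A B ∨ S.ltPlus (k+2) B A := hp2
          rcases hp2' with hAB | hBA
          · exact (hcontra (le_trans' hS (gam_mono hS hAB) hh₁a')).elim
          · rcases gam_mono hS hBA with hBAeq | hBAlt
            · exact (hcontra (le_trans' hS (Or.inl hBAeq.symm) hh₁a')).elim
            · have hγeq : S.gam k (S.gam (k+1) B) = S.gam k a := by
                have h1 : S.gam k (S.gam (k+1) B) = S.gam k a ∨
                    S.ltPlus k (S.gam k (S.gam (k+1) B)) (S.gam k a) := by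
                  rcases hh₁a' with heq | h
                  · exact Or.inl (by rw [heq])
                  · exact gam_mono hS h
                have h2 : S.gam k a = S.gam k (S.gam (k+1) B) ∨
                    S.ltPlus k (S.gam k a) (S.gam k (S.gam (k+1) B)) := by
                  have h3 := gam_mono hS (Relation.TransGen.single
                    (⟨B, hB, hfB, rfl⟩ : S.ltPlusOne (k+1) f (S.gam (k+1) B)))
                  rwa [hγf] at h3
                exact le_antisymm' hS h1 h2
              have hne : S.gam k a ≠ S.gam k (S.gam (k+1) A) := by
                intro heq
                have hac : S.ltPlus k (S.gam k a) (S.gam k c) :=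
                  Relation.TransGen.single ⟨c, hcF, hγ, rfl⟩
                have hcc₁ := gam_mono hS (Relation.TransGen.single
                  (⟨A, hA, hc, rfl⟩ : S.ltPlusOne (k+1) c (S.gam (k+1) A)))
                have hlt : S.ltPlus k (S.gam k a) (S.gam k (S.gam (k+1) A)) := by
                  rcases hcc₁ with h | h
                  · exact h ▸ hac
                  · exact hac.trans h
                exact ltPlus_irrefl' hS (heq ▸ hlt)
              exact Or.inr (lemW hS ha hne _ (S.gam (k+1) B) (hS.1.1 (k+1) B hB)
                hγeq hh₁a' (Or.inr hBAlt) (Nat.lt_succ_self _))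
  · left
    rw [(hS.2.2.1 k A hA).2]
    exact Finset.mem_sdiff.mpr ⟨hdel, him⟩

/-- Exchange lemma: `a ⊲⁻ c` and `c <⁺ b` give `a <⁺ b` or `a <⁻ b`. -/
theorem lemX (hS : S.IsPFS) {k b c : ℕ} (h : S.ltPlus (k+1) c b) :
    ∀ a : ℕ, a ∈ S.faces (k+1) → S.gam k a ∈ S.del k c →
      S.ltPlus (k+1) a b ∨ S.ltMinus (k+1) a b := by
  induction h using Relation.TransGen.head_induction_on with
  | single h =>
    obtain ⟨A, hA, hcA, rfl⟩ := h
    intro a ha hγ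
    rcases lemXstep hS hA hcA ha hγ with h' | h'
    · exact Or.inr (Relation.TransGen.single ⟨ha, hS.1.1 (k+1) A hA, h'⟩)
    · exact Or.inl h'
  | head hstep hcb ihc =>
    obtain ⟨A, hA, hcA, rfl⟩ := hstep
    intro a ha hγ
    rcases lemXstep hS hA hcA ha hγ with h' | h'
    · exact ihc a ha h'
    · exact Or.inl (h'.trans hcb)

/-- `a <⁻ c` and `c <⁺ b` give `a <⁺ b` or `a <⁻ b`. -/
theorem lemL (hS : S.IsPFS) {k b c : ℕ} (hcb : S.ltPlus (k+1) c b) :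
    ∀ {a : ℕ}, S.ltMinus (k+1) a c → S.ltPlus (k+1) a b ∨ S.ltMinus (k+1) a b := by
  intro a h
  induction h using Relation.TransGen.head_induction_on with
  | single h => exact lemX hS hcb _ h.1 h.2.2
  | head hstep _ ihc =>
    rcases ihc with h' | h'
    · exact lemX hS h' _ hstep.1 hstep.2.2
    · exact Or.inr (h'.head hstep)

/-- Iteration inside `δ(B)`: from `a <⁻ g`, `g ∈ δ(B)` we can move up to some
`g' ∈ δ(B)` with `a <⁻ g'` and `γ(g') = γ(γ(B))`. -/
theorem lemIter (hS : S.IsPFS) {k a B : ℕ} (hB : B ∈ S.faces (k+2)) :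
    ∀ n : ℕ, ∀ g : ℕ, g ∈ S.del (k+1) B → S.ltMinus (k+1) a g →
    ((S.del (k+1) B).filter (fun e => S.ltPlus k (S.gam k g) (S.gam k e))).card < n →
    ∃ g' ∈ S.del (k+1) B, S.ltMinus (k+1) a g' ∧
      S.gam k g' = S.gam k (S.gam (k+1) B) := by
  intro n
  induction n with
  | zero => intro g _ _ h; exact absurd h (Nat.not_lt_zero _)
  | succ n ih =>
    intro g hg hag hcard
    by_cases hin : S.gam k g ∈ S.delS k (S.del (k+1) B)
    · obtain ⟨g₂, hg₂, hmem⟩ := Finset.mem_biUnion.mp hin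
      have hgF : g ∈ S.faces (k+1) := hS.1.2.1 (k+1) B hB hg
      have hg₂F : g₂ ∈ S.faces (k+1) := hS.1.2.1 (k+1) B hB hg₂
      have hstep : S.ltPlus k (S.gam k g) (S.gam k g₂) :=
        Relation.TransGen.single ⟨g₂, hg₂F, hmem, rfl⟩
      have hsub : (S.del (k+1) B).filter (fun e => S.ltPlus k (S.gam k g₂) (S.gam k e)) ⊆
          (S.del (k+1) B).filter (fun e => S.ltPlus k (S.gam k g) (S.gam k e)) := by
        intro x hx
        rw [Finset.mem_filter] at hx ⊢
        exact ⟨hx.1, hstep.trans hx.2⟩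
      have hss : (S.del (k+1) B).filter (fun e => S.ltPlus k (S.gam k g₂) (S.gam k e)) ⊂
          (S.del (k+1) B).filter (fun e => S.ltPlus k (S.gam k g) (S.gam k e)) := by
        rw [Finset.ssubset_iff_of_subset hsub]
        refine ⟨g₂, Finset.mem_filter.mpr ⟨hg₂, hstep⟩, fun hmem2 => ?_⟩
        exact ltPlus_irrefl' hS (Finset.mem_filter.mp hmem2).2
      exact ih g₂ hg₂ (hag.tail ⟨hgF, hg₂F, hmem⟩)
        (lt_of_lt_of_le (Finset.card_lt_card hss) (Nat.lt_succ_iff.mp hcard))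
    · have hm : S.gam k g ∈ S.gamS k (S.del (k+1) B) := Finset.mem_image.mpr ⟨g, hg, rfl⟩
      have hsing : S.gam k g ∈ ({S.gam k (S.gam (k+1) B)} : Finset ℕ) := by
        rw [(hS.2.2.1 k B hB).1]
        exact Finset.mem_sdiff.mpr ⟨hm, hin⟩
      exact ⟨g, hg, hag, Finset.mem_singleton.mp hsing⟩

/-- The "descending" lemma: `a <⁻ α`, `b <⁺ α`, `γ(b) = γ(α)` give `a <⁺ b` or `a <⁻ b`. -/
theorem lemY (hS : S.IsPFS) {k b : ℕ} (hb : b ∈ S.faces (k+1)) :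
    ∀ n : ℕ, ∀ α a : ℕ, α ∈ S.faces (k+1) → S.gam k b = S.gam k α →
      S.ltPlus (k+1) b α → S.ltMinus (k+1) a α →
      ((S.faces (k+1)).filter (fun z => S.ltPlus (k+1) z α)).card < n →
      S.ltPlus (k+1) a b ∨ S.ltMinus (k+1) a b := by
  intro n
  induction n with
  | zero => intro α a _ _ _ _ h; exact absurd h (Nat.not_lt_zero _)
  | succ n ih =>
    intro α a hα hγ hbα haα hcard
    obtain ⟨h, hbh, hhα⟩ := Relation.TransGen.tail'_iff.mp hbα
    obtain ⟨B, hB, hhB, hγB⟩ := hhα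
    obtain ⟨e, hae, heα⟩ := Relation.TransGen.tail'_iff.mp haα
    have heαd : S.gam k e ∈ S.del k α := heα.2.2
    have hδα : S.gam k e ∈ S.delS k (S.del (k+1) B) := by
      have hglob := (hS.2.2.1 k B hB).2
      rw [hγB] at hglob
      rw [hglob] at heαd
      exact (Finset.mem_sdiff.mp heαd).1
    obtain ⟨g₁, hg₁, hmem⟩ := Finset.mem_biUnion.mp hδα
    have hg₁F : g₁ ∈ S.faces (k+1) := hS.1.2.1 (k+1) B hB hg₁
    have hag₁ : S.ltMinus (k+1) a g₁ := by
      have hstep : S.ltMinusOne (k+1) e g₁ := ⟨heα.1, hg₁F, hmem⟩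
      rcases Relation.reflTransGen_iff_eq_or_transGen.mp hae with heq | h'
      · rw [← heq]; exact Relation.TransGen.single hstep
      · exact h'.tail hstep
    obtain ⟨g', hg', hag', hγg'⟩ := lemIter hS hB _ g₁ hg₁ hag₁ (Nat.lt_succ_self _)
    have hγg'b : S.gam k g' = S.gam k b := by rw [hγg', hγB, ← hγ]
    have hg'F : g' ∈ S.faces (k+1) := hS.1.2.1 (k+1) B hB hg'
    rcases (hS.2.2.2.2.2.2 k (S.gam k b)).1 g' b hg'F hb hγg'b rfl with rfl | hp
    · exact Or.inr hag'
    · have hp' : S.ltPlus (k+1) g' b ∨ S.ltPlus (k+1) b g' := hp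
      rcases hp' with h' | h'
      · exact lemL hS h' hag'
      · have hg'α : S.ltPlusOne (k+1) g' α := ⟨B, hB, hg', hγB⟩
        have hsub : (S.faces (k+1)).filter (fun z => S.ltPlus (k+1) z g') ⊆
            (S.faces (k+1)).filter (fun z => S.ltPlus (k+1) z α) := by
          intro x hx
          rw [Finset.mem_filter] at hx ⊢
          exact ⟨hx.1, hx.2.tail hg'α⟩
        have hss : (S.faces (k+1)).filter (fun z => S.ltPlus (k+1) z g') ⊂
            (S.faces (k+1)).filter (fun z => S.ltPlus (k+1) z α) := by
          rw [Finset.ssubset_iff_of_subset hsub]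
          refine ⟨g', Finset.mem_filter.mpr ⟨hg'F, Relation.TransGen.single hg'α⟩,
            fun hmem2 => ?_⟩
          exact ltPlus_irrefl' hS (Finset.mem_filter.mp hmem2).2
        exact ih g' a hg'F hγg'b.symm h' hag'
          (lt_of_lt_of_le (Finset.card_lt_card hss) (Nat.lt_succ_iff.mp hcard))

/-- Part 2: `γ(a) <⁺ γ(b)` gives `a <⁺ b` or `a <⁻ b`. -/
theorem lemF3 (hS : S.IsPFS) {k b : ℕ} (hb : b ∈ S.faces (k+1)) {x : ℕ}
    (h : S.ltPlus k x (S.gam k b)) :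
    ∀ a : ℕ, a ∈ S.faces (k+1) → S.gam k a = x →
      S.ltPlus (k+1) a b ∨ S.ltMinus (k+1) a b := by
  induction h using Relation.TransGen.head_induction_on with
  | single h =>
    obtain ⟨α, hαF, hxα, hγα⟩ := h
    intro a ha hγa
    have hmem : S.gam k a ∈ S.del k α := by rw [hγa]; exact hxα
    have haα : S.ltMinusOne (k+1) a α := ⟨ha, hαF, hmem⟩
    rcases (hS.2.2.2.2.2.2 k (S.gam k b)).1 α b hαF hb hγα rfl with rfl | hp
    · exact Or.inr (Relation.TransGen.single haα)
    · have hp' : S.ltPlus (k+1) α b ∨ S.ltPlus (k+1) b α := hp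
      rcases hp' with h' | h'
      · exact lemX hS h' a ha hmem
      · exact lemY hS hb _ α a hαF hγα.symm h'
          (Relation.TransGen.single haα) (Nat.lt_succ_self _)
  | head hstep hxb ihx =>
    obtain ⟨α, hαF, hxα, hγα⟩ := hstep
    intro a ha hγa
    have hmem : S.gam k a ∈ S.del k α := by rw [hγa]; exact hxα
    have haα : S.ltMinusOne (k+1) a α := ⟨ha, hαF, hmem⟩
    rcases ihx α hαF hγα with h' | h'
    · exact lemX hS h' a ha hmem
    · exact Or.inr (h'.head haα)

end PreHG


/-- For `a, b ∈ S_n`: if `γ(a) = γ(b)` then `a = b` or `a ⊥⁺ b`;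
if `γ(a) <⁺ γ(b)` then `a <⁺ b` or `a <⁻ b`; if `a <⁻ b` then `γ(a) <⁺ γ(b)`. -/
theorem stmt11 (S : PreHG) (hS : S.IsPFS) (k a b : ℕ)
    (ha : a ∈ S.faces (k+1)) (hb : b ∈ S.faces (k+1)) :
    (S.gam k a = S.gam k b → a = b ∨ S.perpPlus (k+1) a b) ∧
    (S.ltPlus k (S.gam k a) (S.gam k b) →
      S.ltPlus (k+1) a b ∨ S.ltMinus (k+1) a b) ∧
    (S.ltMinus (k+1) a b → S.ltPlus k (S.gam k a) (S.gam k b)) := by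
  refine ⟨?_, ?_, fun h => PreHG.gam_ltPlus_of_ltMinus h⟩
  · intro h
    exact (hS.2.2.2.2.2.2 k (S.gam k b)).1 a b ha hb h rfl
  · intro h
    exact PreHG.lemF3 hS hb h a ha rfl
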